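/- Let D be a nonempty convex set of non-negative countably additive finite measures absolutely continuous w.r.t. P, and suppose μ̂ ∈ D minimizes μ ↦ E[V(dμ/dP) + (dμ/dP)ℰ] over D, with finite value. Then for any μ ∈ D with E[V(dμ/dP) + (dμ/dP)ℰ] < ∞ one has μ ≪ μ̂ (i.e. there is no event A with μ̂(A) = 0 and μ(A) > 0). -/

import Mathlib

open Set Filter MeasureTheory NNReal

private lemma integrable_of_bounds {Ω : Type*} {m : MeasurableSpace Ω} {Q : Measure Ω}
    {F L U : Ω → ℝ} (hL : Integrable L Q) (hU : Integrable U Q)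
    (hF : AEStronglyMeasurable F Q)
    (h1 : ∀ᵐ ω ∂Q, L ω ≤ F ω) (h2 : ∀ᵐ ω ∂Q, F ω ≤ U ω) : Integrable F Q := by
  refine (hL.abs.add hU.abs).mono' hF ?_
  filter_upwards [h1, h2] with ω hl hu
  have l1 := le_abs_self (L ω); have l2 := neg_abs_le (L ω)
  have l3 := le_abs_self (U ω); have l4 := neg_abs_le (U ω)
  have l5 := abs_nonneg (L ω); have l6 := abs_nonneg (U ω)
  rw [Real.norm_eq_abs, abs_le]
  constructor <;> simp only [Pi.add_apply] <;> linarith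

private lemma seg_slope_mono {φ : ℝ → ℝ} (hφ : ConvexOn ℝ (Ici 0) φ)
    {a b s t : ℝ} (ha : 0 ≤ a) (hb : 0 ≤ b) (hs : 0 < s) (hst : s ≤ t) (ht : t ≤ 1) :
    (φ (s * a + (1 - s) * b) - φ b) / s ≤ (φ (t * a + (1 - t) * b) - φ b) / t := by
  have ht0 : 0 < t := hs.trans_le hst
  have hs1 : s ≤ 1 := hst.trans ht
  rcases eq_or_ne a b with rfl | hab
  · rw [show s * a + (1 - s) * a = a by ring, show t * a + (1 - t) * a = a by ring]
    simp
  set ps := s * a + (1 - s) * b with hps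
  set pt := t * a + (1 - t) * b with hpt
  have hpsm : ps ∈ Ici (0:ℝ) := by simp only [mem_Ici, hps]; nlinarith
  have hptm : pt ∈ Ici (0:ℝ) := by simp only [mem_Ici, hpt]; nlinarith
  have hps' : ps - b = s * (a - b) := by rw [hps]; ring
  have hpt' : pt - b = t * (a - b) := by rw [hpt]; ring
  rcases hab.lt_or_gt with hab | hab
  · have hab0 : a - b ≠ 0 := by intro h; nlinarith
    have hpsb : ps ≠ b := by simp only [hps]; intro h; nlinarith
    have hptb : pt ≠ b := by simp only [hpt]; intro h; nlinarith
    have h := hφ.secant_mono (mem_Ici.2 hb) hptm hpsm hptb hpsb (by nlinarith)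
    rw [hps', hpt'] at h
    have hc : a - b < 0 := by linarith
    have h2 := mul_le_mul_of_nonpos_right h hc.le
    have e1 : (φ pt - φ b) / (t * (a - b)) * (a - b) = (φ pt - φ b) / t := by
      field_simp
    have e2 : (φ ps - φ b) / (s * (a - b)) * (a - b) = (φ ps - φ b) / s := by
      field_simp
    rw [e1, e2] at h2
    linarith
  · have hab0 : a - b ≠ 0 := by intro h; nlinarith
    have hpsb : ps ≠ b := by simp only [hps]; intro h; nlinarith
    have hptb : pt ≠ b := by simp only [hpt]; intro h; nlinarith
    have h := hφ.secant_mono (mem_Ici.2 hb) hpsm hptm hpsb hptb (by nlinarith)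
    rw [hps', hpt'] at h
    have hc : 0 < a - b := by linarith
    have h2 := mul_le_mul_of_nonneg_right h hc.le
    have e1 : (φ pt - φ b) / (t * (a - b)) * (a - b) = (φ pt - φ b) / t := by
      field_simp
    have e2 : (φ ps - φ b) / (s * (a - b)) * (a - b) = (φ ps - φ b) / s := by
      field_simp
    rw [e1, e2] at h2
    linarith

private lemma slope_zero_atBot {V : ℝ → ℝ} (hVconv : ConvexOn ℝ (Ici 0) V)
    (hVdiff : ∀ y : ℝ, 0 < y → DifferentiableAt ℝ V y)
    (hV'0 : Tendsto (deriv V) (nhdsWithin 0 (Ioi 0)) atBot) :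
    Tendsto (fun y => (V y - V 0) / y) (nhdsWithin 0 (Ioi 0)) atBot := by
  refine tendsto_atBot_mono' _ ?_ hV'0
  filter_upwards [self_mem_nhdsWithin] with y (hy : y ∈ Ioi 0)
  have := hVconv.slope_le_deriv (mem_Ici.2 le_rfl) (mem_Ici.2 hy.le) hy (hVdiff y hy)
  rw [slope_def_field] at this
  simpa using this

/-- If `μ̂` minimizes `μ ↦ E[V(dμ/dP) + (dμ/dP) ℰ]` over a nonempty convex set `D`
of non-negative countably additive finite measures `≪ P`, with finite value, then any `μ ∈ D`
with finite value satisfies `μ ≪ μ̂`. -/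
theorem minimizer_maximal_support
    {Ω : Type*} {m : MeasurableSpace Ω} (P : Measure Ω) [IsProbabilityMeasure P]
    (V : ℝ → ℝ) (hVconv : StrictConvexOn ℝ (Ici 0) V)
    (hVdiff : ∀ y : ℝ, 0 < y → DifferentiableAt ℝ V y)
    (hV'0 : Tendsto (deriv V) (nhdsWithin 0 (Ioi 0)) atBot)  -- V'(0) = -∞
    (ℰ : Ω → ℝ) (x' : ℝ) (hℰ : ∀ ω, x' ≤ ℰ ω)
    (D : Set (Measure Ω)) (hD : D.Nonempty)
    (hconv : ∀ μ ν, μ ∈ D → ν ∈ D → ∀ a b : ℝ≥0, a + b = 1 → a • μ + b • ν ∈ D)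
    (hDP : ∀ μ ∈ D, μ ≪ P ∧ IsFiniteMeasure μ)
    (μhat : Measure Ω) (hμhatD : μhat ∈ D)
    (hfin : Integrable (fun ω =>
        V ((μhat.rnDeriv P ω).toReal) + (μhat.rnDeriv P ω).toReal * ℰ ω) P)
    (hmin : ∀ μ ∈ D,
        Integrable (fun ω => V ((μ.rnDeriv P ω).toReal) + (μ.rnDeriv P ω).toReal * ℰ ω) P →
        ∫ ω, (V ((μhat.rnDeriv P ω).toReal) + (μhat.rnDeriv P ω).toReal * ℰ ω) ∂P ≤
          ∫ ω, (V ((μ.rnDeriv P ω).toReal) + (μ.rnDeriv P ω).toReal * ℰ ω) ∂P) :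
    ∀ μ ∈ D,
      Integrable (fun ω => V ((μ.rnDeriv P ω).toReal) + (μ.rnDeriv P ω).toReal * ℰ ω) P →
      μ ≪ μhat := by
  classical
  intro μ hμD hμint
  obtain ⟨hμP, hμfin⟩ := hDP μ hμD
  obtain ⟨hμhatP, hμhatfin⟩ := hDP μhat hμhatD
  haveI := hμfin; haveI := hμhatfin
  -- a measurable version of V on [0,∞)
  obtain ⟨W, hWmeas, hWeq⟩ : ∃ W : ℝ → ℝ, Measurable W ∧ ∀ y : ℝ, 0 ≤ y → W y = V y := by
    refine ⟨Function.extend (fun y : Ioi (0:ℝ) => (y : ℝ)) (fun y => V y) (fun _ => V 0),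
      ?_, ?_⟩
    · refine (MeasurableEmbedding.subtype_coe measurableSet_Ioi).measurable_extend
        ?_ measurable_const
      have hc : ContinuousOn V (Ioi 0) := fun y hy =>
        (hVdiff y hy).continuousAt.continuousWithinAt
      exact hc.restrict.measurable
    · intro y hy
      rcases eq_or_lt_of_le hy with h | hy'
      · rw [← h, Function.extend_apply']
        rintro ⟨⟨z, hz⟩, hzy⟩
        exact absurd hzy (ne_of_gt hz)
      · exact Subtype.val_injective.extend_apply _ _ ⟨y, hy'⟩
  set f : Ω → ℝ := fun ω => (μ.rnDeriv P ω).toReal with hfdef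
  set g : Ω → ℝ := fun ω => (μhat.rnDeriv P ω).toReal with hgdef
  have hf0 : ∀ ω, 0 ≤ f ω := fun ω => ENNReal.toReal_nonneg
  have hg0 : ∀ ω, 0 ≤ g ω := fun ω => ENNReal.toReal_nonneg
  have hfm : Measurable f := (Measure.measurable_rnDeriv μ P).ennreal_toReal
  have hgm : Measurable g := (Measure.measurable_rnDeriv μhat P).ennreal_toReal
  have hfint : Integrable f P := Measure.integrable_toReal_rnDeriv
  have hgint : Integrable g P := Measure.integrable_toReal_rnDeriv
  -- integrands with W
  have hΦf : Integrable (fun ω => W (f ω) + f ω * ℰ ω) P := by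
    refine hμint.congr (Eventually.of_forall fun ω => ?_)
    show V ((μ.rnDeriv P ω).toReal) + (μ.rnDeriv P ω).toReal * ℰ ω = W (f ω) + f ω * ℰ ω
    rw [hWeq _ (hf0 ω)]
  have hΦg : Integrable (fun ω => W (g ω) + g ω * ℰ ω) P := by
    refine hfin.congr (Eventually.of_forall fun ω => ?_)
    show V ((μhat.rnDeriv P ω).toReal) + (μhat.rnDeriv P ω).toReal * ℰ ω = W (g ω) + g ω * ℰ ω
    rw [hWeq _ (hg0 ω)]
  -- supporting line at 1
  set d : ℝ := deriv V 1 with hd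
  have hsupp : ∀ y : ℝ, 0 ≤ y → V 1 + d * (y - 1) ≤ V y := by
    intro y hy
    rcases lt_trichotomy y 1 with h1 | h1 | h1
    · have h2 := hVconv.convexOn.slope_le_deriv (mem_Ici.2 hy) (mem_Ici.2 zero_le_one) h1
        (hVdiff 1 one_pos)
      rw [slope_def_field, div_le_iff₀ (by linarith : (0:ℝ) < 1 - y)] at h2
      linarith
    · rw [h1]; simp
    · have h2 := hVconv.convexOn.deriv_le_slope (mem_Ici.2 zero_le_one) (mem_Ici.2 hy) h1
        (hVdiff 1 one_pos)
      rw [slope_def_field, le_div_iff₀ (by linarith : (0:ℝ) < y - 1)] at h2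
      linarith
  -- products with ℰ are integrable
  have hfE : Integrable (fun ω => f ω * ℰ ω) P := by
    have hsm : AEStronglyMeasurable (fun ω => f ω * ℰ ω) P := by
      have h : (fun ω => f ω * ℰ ω) = fun ω => (V (f ω) + f ω * ℰ ω) - W (f ω) := by
        funext ω; rw [hWeq _ (hf0 ω)]; ring
      rw [h]
      exact hμint.aestronglyMeasurable.sub (hWmeas.comp hfm).aestronglyMeasurable
    refine integrable_of_bounds (L := fun ω => f ω * x')
      (U := fun ω => (V (f ω) + f ω * ℰ ω) - (V 1 + d * (f ω - 1)))
      (hfint.mul_const x')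
      (hμint.sub ((integrable_const (V 1)).add
        ((hfint.sub (integrable_const 1)).const_mul d))) hsm ?_ ?_
    · exact Eventually.of_forall fun ω => mul_le_mul_of_nonneg_left (hℰ ω) (hf0 ω)
    · refine Eventually.of_forall fun ω => ?_
      show f ω * ℰ ω ≤ V (f ω) + f ω * ℰ ω - (V 1 + d * (f ω - 1))
      have := hsupp (f ω) (hf0 ω); linarith
  have hgE : Integrable (fun ω => g ω * ℰ ω) P := by
    have hsm : AEStronglyMeasurable (fun ω => g ω * ℰ ω) P := by
      have h : (fun ω => g ω * ℰ ω) = fun ω => (V (g ω) + g ω * ℰ ω) - W (g ω) := by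
        funext ω; rw [hWeq _ (hg0 ω)]; ring
      rw [h]
      exact hfin.aestronglyMeasurable.sub (hWmeas.comp hgm).aestronglyMeasurable
    refine integrable_of_bounds (L := fun ω => g ω * x')
      (U := fun ω => (V (g ω) + g ω * ℰ ω) - (V 1 + d * (g ω - 1)))
      (hgint.mul_const x')
      (hfin.sub ((integrable_const (V 1)).add
        ((hgint.sub (integrable_const 1)).const_mul d))) hsm ?_ ?_
    · exact Eventually.of_forall fun ω => mul_le_mul_of_nonneg_left (hℰ ω) (hg0 ω)
    · refine Eventually.of_forall fun ω => ?_
      show g ω * ℰ ω ≤ V (g ω) + g ω * ℰ ω - (V 1 + d * (g ω - 1))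
      have := hsupp (g ω) (hg0 ω); linarith
  -- convexity of the W-integrand
  have hWconv : ConvexOn ℝ (Ici 0) W := by
    refine ⟨convex_Ici 0, fun x hx y hy p q hp hq hpq => ?_⟩
    have hmem : p • x + q • y ∈ Ici (0:ℝ) := (convex_Ici 0) hx hy hp hq hpq
    rw [hWeq _ hx, hWeq _ hy, hWeq _ hmem]
    exact hVconv.convexOn.2 hx hy hp hq hpq
  have hφconv : ∀ ω, ConvexOn ℝ (Ici 0) (fun y => W y + y * ℰ ω) := by
    intro ω
    refine hWconv.add ⟨convex_Ici 0, fun x hx y hy p q hp hq hpq => le_of_eq ?_⟩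
    simp only [smul_eq_mul]; ring
  -- the key a.e. statement
  suffices key : ∀ᵐ ω ∂P, μhat.rnDeriv P ω = 0 → μ.rnDeriv P ω = 0 by
    intro s hs
    have hts : s ⊆ toMeasurable μhat s := subset_toMeasurable _ _
    have hμhatt : μhat (toMeasurable μhat s) = 0 := by rwa [measure_toMeasurable]
    refine measure_mono_null hts ?_
    have h1 : ∫⁻ ω in toMeasurable μhat s, μhat.rnDeriv P ω ∂P = 0 := by
      rw [Measure.setLIntegral_rnDeriv hμhatP]; exact hμhatt
    have h2 : μhat.rnDeriv P =ᵐ[P.restrict (toMeasurable μhat s)] 0 :=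
      (lintegral_eq_zero_iff (Measure.measurable_rnDeriv _ _)).mp h1
    have h3 : μ.rnDeriv P =ᵐ[P.restrict (toMeasurable μhat s)] 0 := by
      filter_upwards [h2, ae_restrict_of_ae key] with ω ha hb
      exact hb ha
    rw [← Measure.setLIntegral_rnDeriv hμP]
    exact (lintegral_eq_zero_iff (Measure.measurable_rnDeriv _ _)).mpr h3
  by_contra hA
  set A : Set Ω := (μhat.rnDeriv P ⁻¹' {0}) ∩
      ((μ.rnDeriv P ⁻¹' {0})ᶜ ∩ (μ.rnDeriv P ⁻¹' {⊤})ᶜ) with hAdef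
  have hAmeas : MeasurableSet A :=
    ((Measure.measurable_rnDeriv μhat P) (measurableSet_singleton 0)).inter
      ((((Measure.measurable_rnDeriv μ P) (measurableSet_singleton 0)).compl).inter
        (((Measure.measurable_rnDeriv μ P) (measurableSet_singleton ⊤)).compl))
  have hPA : P A ≠ 0 := by
    intro h0
    apply hA
    have h1 : ∀ᵐ ω ∂P, ω ∉ A := measure_eq_zero_iff_ae_notMem.mp h0
    filter_upwards [h1, Measure.rnDeriv_ne_top μ P] with ω ha hb hc
    by_contra h4
    exact ha (by
      simp only [hAdef, mem_inter_iff, mem_preimage, mem_singleton_iff, mem_compl_iff]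
      exact ⟨hc, h4, hb⟩)
  -- the sequence of convex weights
  set c : ℕ → ℝ≥0 := fun n => ((n : ℝ≥0) + 2)⁻¹ with hcdef
  have hcR : ∀ n, ((c n : ℝ≥0) : ℝ) = ((n : ℝ) + 2)⁻¹ := by
    intro n; simp [hcdef]
  have hc_pos : ∀ n, (0:ℝ) < (c n : ℝ) := by
    intro n; rw [hcR]; positivity
  have hn2 : ∀ n : ℕ, (1:ℝ) ≤ (n : ℝ) + 2 := by
    intro n; have := Nat.cast_nonneg (α := ℝ) n; linarith
  have hc_le1R : ∀ n, ((c n : ℝ≥0) : ℝ) ≤ 1 := by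
    intro n; rw [hcR]
    rw [inv_le_one_iff₀]
    right; exact hn2 n
  have hc_le1 : ∀ n, c n ≤ 1 := by
    intro n; rw [← NNReal.coe_le_coe]; simpa using hc_le1R n
  have hc_anti : ∀ ⦃i j : ℕ⦄, i ≤ j → ((c j : ℝ≥0) : ℝ) ≤ ((c i : ℝ≥0) : ℝ) := by
    intro i j hij
    rw [hcR, hcR]
    have h1 : (0:ℝ) < (i : ℝ) + 2 := by positivity
    have h2 : (i : ℝ) + 2 ≤ (j : ℝ) + 2 := by
      have : (i:ℝ) ≤ (j:ℝ) := Nat.cast_le.2 hij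
      linarith
    exact inv_anti₀ h1 h2
  have hc0n : Tendsto (fun n => ((c n : ℝ≥0) : ℝ)) atTop (nhds 0) := by
    simp only [hcR]
    exact tendsto_inv_atTop_zero.comp
      (tendsto_atTop_add_const_right _ 2 tendsto_natCast_atTop_atTop)
  -- the mixed measures
  have hmemD : ∀ n, (c n • μ + (1 - c n) • μhat) ∈ D := fun n =>
    hconv μ μhat hμD hμhatD _ _ (add_tsub_cancel_of_le (hc_le1 n))
  have hrn : ∀ n, (fun ω => (((c n • μ + (1 - c n) • μhat)).rnDeriv P ω).toReal)
      =ᵐ[P] fun ω => (c n : ℝ) * f ω + (1 - (c n : ℝ)) * g ω := by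
    intro n
    have h1 := Measure.rnDeriv_add (c n • μ) ((1 - c n) • μhat) P
    have h2 := Measure.rnDeriv_smul_left μ P (c n)
    have h3 := Measure.rnDeriv_smul_left μhat P (1 - c n)
    filter_upwards [h1, h2, h3, Measure.rnDeriv_ne_top μ P, Measure.rnDeriv_ne_top μhat P]
      with ω ha hb hc hd' he
    rw [ha, Pi.add_apply, hb, hc, Pi.smul_apply, Pi.smul_apply, ENNReal.smul_def,
      ENNReal.smul_def, smul_eq_mul, smul_eq_mul,
      ENNReal.toReal_add (ENNReal.mul_ne_top ENNReal.coe_ne_top hd')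
        (ENNReal.mul_ne_top ENNReal.coe_ne_top he),
      ENNReal.toReal_mul, ENNReal.toReal_mul, ENNReal.coe_toReal, ENNReal.coe_toReal,
      NNReal.coe_sub (hc_le1 n), NNReal.coe_one]
  set tn : ℕ → Ω → ℝ := fun n ω => (c n : ℝ) * f ω + (1 - (c n : ℝ)) * g ω with htndef
  have htn0 : ∀ n ω, 0 ≤ tn n ω := by
    intro n ω
    have := hc_le1R n
    have := hc_pos n
    have := hf0 ω; have := hg0 ω
    simp only [htndef]
    nlinarith
  have htnmeas : ∀ n, Measurable (tn n) := fun n => (hfm.const_mul _).add (hgm.const_mul _)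
  have htnint : ∀ n, Integrable (tn n) P := fun n =>
    (hfint.const_mul _).add (hgint.const_mul _)
  have htnE : ∀ n, Integrable (fun ω => tn n ω * ℰ ω) P := by
    intro n
    refine ((hfE.const_mul ((c n : ℝ))).add (hgE.const_mul (1 - (c n : ℝ)))).congr
      (Eventually.of_forall fun ω => ?_)
    simp only [Pi.add_apply, htndef]; ring
  have hΦtn : ∀ n, Integrable (fun ω => W (tn n ω) + tn n ω * ℰ ω) P := by
    intro n
    have hsm : AEStronglyMeasurable (fun ω => W (tn n ω) + tn n ω * ℰ ω) P :=
      ((hWmeas.comp (htnmeas n)).aestronglyMeasurable).add (htnE n).aestronglyMeasurable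
    refine integrable_of_bounds
      (L := fun ω => (V 1 + d * (tn n ω - 1)) + tn n ω * x')
      (U := fun ω => (c n : ℝ) * (W (f ω) + f ω * ℰ ω) +
        (1 - (c n : ℝ)) * (W (g ω) + g ω * ℰ ω))
      (((integrable_const (V 1)).add (((htnint n).sub (integrable_const 1)).const_mul d)).add
        ((htnint n).mul_const x'))
      ((hΦf.const_mul _).add (hΦg.const_mul _)) hsm ?_ ?_
    · refine Eventually.of_forall fun ω => ?_
      show V 1 + d * (tn n ω - 1) + tn n ω * x' ≤ W (tn n ω) + tn n ω * ℰ ω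
      have h1 : V 1 + d * (tn n ω - 1) ≤ V (tn n ω) := hsupp _ (htn0 n ω)
      have h2 : tn n ω * x' ≤ tn n ω * ℰ ω :=
        mul_le_mul_of_nonneg_left (hℰ ω) (htn0 n ω)
      rw [hWeq _ (htn0 n ω)]
      linarith
    · refine Eventually.of_forall fun ω => ?_
      show W (tn n ω) + tn n ω * ℰ ω ≤
        (c n : ℝ) * (W (f ω) + f ω * ℰ ω) + (1 - (c n : ℝ)) * (W (g ω) + g ω * ℰ ω)
      have h := (hφconv ω).2 (mem_Ici.2 (hf0 ω)) (mem_Ici.2 (hg0 ω))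
        (hc_pos n).le (by have := hc_le1R n; linarith)
        (by ring : (c n : ℝ) + (1 - (c n : ℝ)) = 1)
      simpa only [smul_eq_mul] using h
  -- the difference quotients
  set u : ℕ → Ω → ℝ := fun n ω =>
    ((W (tn n ω) + tn n ω * ℰ ω) - (W (g ω) + g ω * ℰ ω)) / (c n : ℝ) with hudef
  set utop : Ω → ℝ := fun ω =>
    (W (f ω) + f ω * ℰ ω) - (W (g ω) + g ω * ℰ ω) with hutopdef
  have humono : ∀ ω ⦃i j : ℕ⦄, i ≤ j → u j ω ≤ u i ω := by
    intro ω i j hij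
    exact seg_slope_mono (hφconv ω) (hf0 ω) (hg0 ω) (hc_pos j) (hc_anti hij) (hc_le1R i)
  have hutople : ∀ ω n, u n ω ≤ utop ω := by
    intro ω n
    have h := seg_slope_mono (hφconv ω) (hf0 ω) (hg0 ω) (hc_pos n) (hc_le1R n) le_rfl
    rw [show (1:ℝ) * f ω + (1 - 1) * g ω = f ω by ring, div_one] at h
    exact h
  have huint : ∀ n, Integrable (u n) P := fun n => ((hΦtn n).sub hΦg).div_const _
  have hutopint : Integrable utop P := hΦf.sub hΦg
  have hu_nonneg : ∀ n, 0 ≤ ∫ ω, u n ω ∂P := by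
    intro n
    have hae : (fun ω => V (((c n • μ + (1 - c n) • μhat).rnDeriv P ω).toReal) +
        ((c n • μ + (1 - c n) • μhat).rnDeriv P ω).toReal * ℰ ω)
        =ᵐ[P] fun ω => W (tn n ω) + tn n ω * ℰ ω := by
      filter_upwards [hrn n] with ω h
      rw [h, hWeq _ (htn0 n ω)]
    have h1 := hmin _ (hmemD n) ((hΦtn n).congr hae.symm)
    rw [integral_congr_ae hae] at h1
    have h2 : ∫ ω, (V (g ω) + g ω * ℰ ω) ∂P = ∫ ω, (W (g ω) + g ω * ℰ ω) ∂P :=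
      integral_congr_ae (Eventually.of_forall fun ω => by
        show V (g ω) + g ω * ℰ ω = W (g ω) + g ω * ℰ ω
        rw [hWeq _ (hg0 ω)])
    rw [h2] at h1
    simp only [hudef]
    rw [integral_div, integral_sub (hΦtn n) hΦg]
    exact div_nonneg (sub_nonneg.2 h1) (hc_pos n).le
  set C : ℝ := ∫ ω, utop ω ∂P with hCdef
  have hSint : ∀ n, Integrable (fun ω => utop ω - u n ω) P := fun n =>
    hutopint.sub (huint n)
  have hSnonneg : ∀ n ω, 0 ≤ utop ω - u n ω := fun n ω => sub_nonneg.2 (hutople ω n)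
  have hlineq : ∀ n, ∫⁻ ω, ENNReal.ofReal (utop ω - u n ω) ∂P ≤ ENNReal.ofReal C := by
    intro n
    rw [← ofReal_integral_eq_lintegral_ofReal (hSint n)
      (Eventually.of_forall (hSnonneg n))]
    apply ENNReal.ofReal_le_ofReal
    rw [integral_sub hutopint (huint n)]
    have := hu_nonneg n
    simp only [hCdef]
    linarith
  have hmct : ∫⁻ ω, (⨆ n, ENNReal.ofReal (utop ω - u n ω)) ∂P ≤ ENNReal.ofReal C := by
    rw [lintegral_iSup' (fun n => ((hSint n).aestronglyMeasurable.aemeasurable).ennreal_ofReal)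
      (Eventually.of_forall fun ω i j hij =>
        ENNReal.ofReal_le_ofReal (by have := humono ω hij; linarith))]
    exact iSup_le hlineq
  have htop : ∀ ω ∈ A, (⨆ n, ENNReal.ofReal (utop ω - u n ω)) = ⊤ := by
    intro ω hω
    have hωA : μhat.rnDeriv P ω = 0 ∧ ¬ μ.rnDeriv P ω = 0 ∧ ¬ μ.rnDeriv P ω = ⊤ := by
      simpa only [hAdef, mem_inter_iff, mem_preimage, mem_singleton_iff, mem_compl_iff]
        using hω
    have hg0' : g ω = 0 := by simp [hgdef, hωA.1]
    have hf0' : 0 < f ω := ENNReal.toReal_pos hωA.2.1 hωA.2.2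
    have hlim : Tendsto (fun n => u n ω) atTop atBot := by
      have h1 : Tendsto (fun n => (c n : ℝ) * f ω) atTop (nhdsWithin 0 (Ioi 0)) := by
        rw [tendsto_nhdsWithin_iff]
        constructor
        · simpa using hc0n.mul_const (f ω)
        · exact Eventually.of_forall fun n => mul_pos (hc_pos n) hf0'
      have h2 : Tendsto (fun n => (V ((c n : ℝ) * f ω) - V 0) / ((c n : ℝ) * f ω))
          atTop atBot := (slope_zero_atBot hVconv.convexOn hVdiff hV'0).comp h1
      have h3 := h2.atBot_mul_const' hf0'
      have h4 := tendsto_atBot_add_const_right atTop (f ω * ℰ ω) h3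
      refine h4.congr fun n => ?_
      have htneq : tn n ω = (c n : ℝ) * f ω := by simp [htndef, hg0']
      simp only [hudef, htneq, hg0', mul_zero, zero_mul, add_zero]
      rw [hWeq _ (by positivity), hWeq 0 le_rfl]
      have hcn := hc_pos n
      field_simp
      ring
    have h5 : Tendsto (fun n => utop ω - u n ω) atTop atTop := by
      simp only [sub_eq_add_neg]
      exact tendsto_atTop_add_const_left _ _ (tendsto_neg_atBot_atTop.comp hlim)
    have h6 : Tendsto (fun n => ENNReal.ofReal (utop ω - u n ω)) atTop (nhds ⊤) :=
      ENNReal.tendsto_ofReal_atTop.comp h5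
    have h7 := tendsto_atTop_iSup
      (f := fun n => ENNReal.ofReal (utop ω - u n ω))
      (fun i j hij => ENNReal.ofReal_le_ofReal (by have := humono ω hij; linarith))
    exact tendsto_nhds_unique h7 h6
  have hind : ∀ ω, A.indicator (fun _ => (⊤ : ENNReal)) ω ≤
      ⨆ n, ENNReal.ofReal (utop ω - u n ω) := by
    intro ω
    by_cases hω : ω ∈ A
    · rw [indicator_of_mem hω, htop ω hω]
    · rw [indicator_of_notMem hω]; exact bot_le
  have h8 := (lintegral_mono hind).trans hmct
  rw [lintegral_indicator hAmeas, setLIntegral_const, ENNReal.top_mul hPA] at h8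
  exact absurd h8 (by simp)
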